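/- Assume ε = +1 (non-twisted heterodimensional cycle). Then the maximal invariant set satisfies Λ = {P} ∪ {Q} ∪ O(γ) ∪ O(a). Consequently, the only f-invariant ergodic Borel probability measures μ on ℝ³ with μ(W) = 1 are the Dirac measures δ_P and δ_Q; in particular, no measure t δ_P + (1−t) δ_Q with t ∈ (0,1) is a weak* limit (i.e., a limit against all bounded continuous functions) of f-invariant ergodic Borel probability measures giving full measure to W. -/

import Mathlib

open MeasureTheory Filter

/-- Three-dimensional Euclidean space `ℝ³`, written as `ℝ × ℝ × ℝ`. -/
abbrev E3 : Type := ℝ × ℝ × ℝ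

/-- The point `P = (0,0,0)`. -/
def Ppt : E3 := (0, 0, 0)

/-- The open cube `c + (−1−2δ, 1+2δ)³` around a point `c`. -/
def bigCube (c : E3) (δ : ℝ) : Set E3 :=
  {v | |v.1 - c.1| < 1 + 2 * δ ∧ |v.2.1 - c.2.1| < 1 + 2 * δ ∧ |v.2.2 - c.2.2| < 1 + 2 * δ}

/-- The box `Δ_P = {P + (1+x, y, z) : x, y, z ∈ [−δ, δ]}`. -/
def DeltaP (δ : ℝ) : Set E3 :=
  {v | v.1 ∈ Set.Icc (1 - δ) (1 + δ) ∧ v.2.1 ∈ Set.Icc (-δ) δ ∧ v.2.2 ∈ Set.Icc (-δ) δ}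

/-- The box `Δ_Q = {Q + (x, y, −1+z) : x, y, z ∈ [−δ, δ]}`. -/
def DeltaQ (Q : E3) (δ : ℝ) : Set E3 :=
  {v | v.1 - Q.1 ∈ Set.Icc (-δ) δ ∧ v.2.1 - Q.2.1 ∈ Set.Icc (-δ) δ ∧
    v.2.2 - Q.2.2 ∈ Set.Icc (-1 - δ) (-1 + δ)}

/-- The cycle neighborhood
`W = U_P ∪ U_Q ∪ ⋃_{i=1}^{n−1} f^i(Δ_P) ∪ ⋃_{j=1}^{m−1} f^j(Δ_Q)`. -/
def cycleNbhd (f : Equiv.Perm E3) (Q : E3) (n m : ℕ) (δ : ℝ) : Set E3 :=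
  bigCube Ppt δ ∪ bigCube Q δ ∪
    (⋃ i ∈ Finset.Ico 1 n, (f ^ i) '' DeltaP δ) ∪
    (⋃ j ∈ Finset.Ico 1 m, (f ^ j) '' DeltaQ Q δ)

/-- The maximal invariant set `Λ = ⋂_{k ∈ ℤ} f^k(W)`. -/
def maxInvSet (f : Equiv.Perm E3) (Q : E3) (n m : ℕ) (δ : ℝ) : Set E3 :=
  ⋂ k : ℤ, (f ^ k) '' cycleNbhd f Q n m δ

/-- The segment `γ = {P + (s, 0, 0) : s ∈ [1−δ, 1+δ]}`. -/
def gammaSeg (δ : ℝ) : Set E3 :=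
  {v | v.1 ∈ Set.Icc (1 - δ) (1 + δ) ∧ v.2.1 = 0 ∧ v.2.2 = 0}

/-- The point `a = Q + (0, 0, −1)`. -/
def aPt (Q : E3) : E3 := (Q.1, Q.2.1, Q.2.2 - 1)

/-- The full orbit `O(A) = ⋃_{k ∈ ℤ} f^k(A)` of a set `A`. -/
def fullOrbit (f : Equiv.Perm E3) (A : Set E3) : Set E3 :=
  ⋃ k : ℤ, (f ^ k) '' A


/-! ### Auxiliary development -/

section Aux

variable {n m : ℕ} {δ : ℝ} {Q : E3} {f : Equiv.Perm E3}

/-- Bundle of the standing hypotheses. -/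
structure Hyp (n m : ℕ) (δ : ℝ) (Q : E3) (f : Equiv.Perm E3) : Prop where
  hn : 2 ≤ n
  hm : 2 ≤ m
  hδ0 : 0 < δ
  hδ : δ ≤ ((4 : ℝ) ^ (n + m))⁻¹
  hdisj : bigCube Ppt δ ∩ bigCube Q δ = ∅
  hdisjPQ : f '' bigCube Ppt δ ∩ bigCube Q δ = ∅
  hdisjQP : f '' bigCube Q δ ∩ bigCube Ppt δ = ∅
  hlocP : ∀ v ∈ bigCube Ppt δ, f v = (2 * v.1, v.2.1 / 4, 4 * v.2.2)
  hlocQ : ∀ v ∈ bigCube Q δ,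
      f v = (Q.1 + (v.1 - Q.1) / 2, Q.2.1 + (v.2.1 - Q.2.1) / 4, Q.2.2 + 4 * (v.2.2 - Q.2.2))
  htransP : ∀ x ∈ Set.Icc (-δ) δ, ∀ y ∈ Set.Icc (-δ) δ, ∀ z ∈ Set.Icc (-δ) δ,
      (f ^ n) ((1 + x, y, z) : E3)
          = (Q.1 + (-1 + x), Q.2.1 + y / 4 ^ n, Q.2.2 + 4 ^ n * z) ∧
      ∀ i, 1 ≤ i → i < n →
        (f ^ i) ((1 + x, y, z) : E3) ∉ bigCube Ppt δ ∪ bigCube Q δ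
  htransQ : ∀ x ∈ Set.Icc (-δ) δ, ∀ y ∈ Set.Icc (-δ) δ, ∀ z ∈ Set.Icc (-δ) δ,
      (f ^ m) ((Q.1 + x, Q.2.1 + y, Q.2.2 + (-1 + z)) : E3)
          = ((1 : ℝ) * x, -1 + y / 4, 4 * z) ∧
      ∀ j, 1 ≤ j → j < m →
        (f ^ j) ((Q.1 + x, Q.2.1 + y, Q.2.2 + (-1 + z)) : E3) ∉
          bigCube Ppt δ ∪ bigCube Q δ

lemma mem_UP {v : E3} :
    v ∈ bigCube Ppt δ ↔ |v.1| < 1 + 2 * δ ∧ |v.2.1| < 1 + 2 * δ ∧ |v.2.2| < 1 + 2 * δ := by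
  simp [bigCube, Ppt]

lemma mem_UQ {v : E3} :
    v ∈ bigCube Q δ ↔ |v.1 - Q.1| < 1 + 2 * δ ∧ |v.2.1 - Q.2.1| < 1 + 2 * δ ∧
      |v.2.2 - Q.2.2| < 1 + 2 * δ := Iff.rfl

lemma mem_DP {v : E3} :
    v ∈ DeltaP δ ↔ (1 - δ ≤ v.1 ∧ v.1 ≤ 1 + δ) ∧ (-δ ≤ v.2.1 ∧ v.2.1 ≤ δ) ∧
      (-δ ≤ v.2.2 ∧ v.2.2 ≤ δ) := Iff.rfl

lemma mem_DQ {v : E3} :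
    v ∈ DeltaQ Q δ ↔ (-δ ≤ v.1 - Q.1 ∧ v.1 - Q.1 ≤ δ) ∧
      (-δ ≤ v.2.1 - Q.2.1 ∧ v.2.1 - Q.2.1 ≤ δ) ∧
      (-1 - δ ≤ v.2.2 - Q.2.2 ∧ v.2.2 - Q.2.2 ≤ -1 + δ) := Iff.rfl

namespace Hyp

lemma hδ1 (H : Hyp n m δ Q f) : δ ≤ 1 / 256 := by
  have hnm := H.hn; have hmm := H.hm
  have h4 : (4 : ℝ) ^ 4 ≤ 4 ^ (n + m) := by
    apply pow_le_pow_right₀ (by norm_num); omega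
  calc δ ≤ ((4 : ℝ) ^ (n + m))⁻¹ := H.hδ
    _ ≤ (4 ^ 4 : ℝ)⁻¹ := inv_anti₀ (by positivity) h4
    _ = 1 / 256 := by norm_num

lemma h4nδ (H : Hyp n m δ Q f) : (4 : ℝ) ^ n * δ ≤ 1 / 16 := by
  have e : (4 : ℝ) ^ n * ((4 : ℝ) ^ (n + m))⁻¹ = ((4 : ℝ) ^ m)⁻¹ := by
    rw [pow_add]; field_simp
  calc (4 : ℝ) ^ n * δ ≤ (4 : ℝ) ^ n * ((4 : ℝ) ^ (n + m))⁻¹ := by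
        apply mul_le_mul_of_nonneg_left H.hδ (by positivity)
    _ = ((4 : ℝ) ^ m)⁻¹ := e
    _ ≤ ((4 : ℝ) ^ 2)⁻¹ := inv_anti₀ (by positivity) (pow_le_pow_right₀ (by norm_num) H.hm)
    _ = 1 / 16 := by norm_num

lemma DPsubUP (H : Hyp n m δ Q f) {v : E3} (hv : v ∈ DeltaP δ) : v ∈ bigCube Ppt δ := by
  have hδ0 := H.hδ0
  obtain ⟨h1, h2, h3⟩ := (mem_DP).1 hv
  refine mem_UP.2 ⟨?_, ?_, ?_⟩ <;> rw [abs_lt] <;> constructor <;> linarith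

lemma DQsubUQ (H : Hyp n m δ Q f) {v : E3} (hv : v ∈ DeltaQ Q δ) : v ∈ bigCube Q δ := by
  have hδ0 := H.hδ0
  obtain ⟨h1, h2, h3⟩ := (mem_DQ).1 hv
  refine mem_UQ.2 ⟨?_, ?_, ?_⟩ <;> rw [abs_lt] <;> constructor <;> linarith

lemma notUQ_of_UP (H : Hyp n m δ Q f) {v : E3} (hv : v ∈ bigCube Ppt δ) :
    v ∉ bigCube Q δ := fun h => by
  have : v ∈ bigCube Ppt δ ∩ bigCube Q δ := ⟨hv, h⟩
  rw [H.hdisj] at this; exact this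

lemma f_notUQ_of_UP (H : Hyp n m δ Q f) {v : E3} (hv : v ∈ bigCube Ppt δ) :
    f v ∉ bigCube Q δ := fun h => by
  have : f v ∈ f '' bigCube Ppt δ ∩ bigCube Q δ := ⟨⟨v, hv, rfl⟩, h⟩
  rw [H.hdisjPQ] at this; exact this

lemma f_notUP_of_UQ (H : Hyp n m δ Q f) {v : E3} (hv : v ∈ bigCube Q δ) :
    f v ∉ bigCube Ppt δ := fun h => by
  have : f v ∈ f '' bigCube Q δ ∩ bigCube Ppt δ := ⟨⟨v, hv, rfl⟩, h⟩
  rw [H.hdisjQP] at this; exact this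

lemma transP' (H : Hyp n m δ Q f) {w : E3} (hw : w ∈ DeltaP δ) :
    (f ^ n) w = (Q.1 + (w.1 - 2), Q.2.1 + w.2.1 / 4 ^ n, Q.2.2 + 4 ^ n * w.2.2) ∧
    ∀ i, 1 ≤ i → i < n → (f ^ i) w ∉ bigCube Ppt δ ∪ bigCube Q δ := by
  obtain ⟨h1, h2, h3⟩ := (mem_DP).1 hw
  have hx : w.1 - 1 ∈ Set.Icc (-δ) δ := ⟨by linarith [h1.1], by linarith [h1.2]⟩
  have hy : w.2.1 ∈ Set.Icc (-δ) δ := ⟨h2.1, h2.2⟩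
  have hz : w.2.2 ∈ Set.Icc (-δ) δ := ⟨h3.1, h3.2⟩
  have hpt : ((1 + (w.1 - 1), w.2.1, w.2.2) : E3) = w := by
    rw [show (1 + (w.1 - 1) : ℝ) = w.1 by ring]
  have := H.htransP _ hx _ hy _ hz
  rw [hpt] at this
  refine ⟨?_, this.2⟩
  rw [this.1, show (-1 + (w.1 - 1) : ℝ) = w.1 - 2 by ring]

lemma transQ' (H : Hyp n m δ Q f) {v : E3} (hv : v ∈ DeltaQ Q δ) :
    (f ^ m) v = (v.1 - Q.1, -1 + (v.2.1 - Q.2.1) / 4, 4 * (v.2.2 - Q.2.2 + 1)) ∧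
    ∀ j, 1 ≤ j → j < m → (f ^ j) v ∉ bigCube Ppt δ ∪ bigCube Q δ := by
  obtain ⟨h1, h2, h3⟩ := (mem_DQ).1 hv
  have hx : v.1 - Q.1 ∈ Set.Icc (-δ) δ := ⟨h1.1, h1.2⟩
  have hy : v.2.1 - Q.2.1 ∈ Set.Icc (-δ) δ := ⟨h2.1, h2.2⟩
  have hz : v.2.2 - Q.2.2 + 1 ∈ Set.Icc (-δ) δ := ⟨by linarith [h3.1], by linarith [h3.2]⟩
  have hpt : ((Q.1 + (v.1 - Q.1), Q.2.1 + (v.2.1 - Q.2.1),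
      Q.2.2 + (-1 + (v.2.2 - Q.2.2 + 1))) : E3) = v := by
    rw [show (Q.1 + (v.1 - Q.1) : ℝ) = v.1 by ring,
      show (Q.2.1 + (v.2.1 - Q.2.1) : ℝ) = v.2.1 by ring,
      show (Q.2.2 + (-1 + (v.2.2 - Q.2.2 + 1)) : ℝ) = v.2.2 by ring]
  have := H.htransQ _ hx _ hy _ hz
  rw [hpt] at this
  refine ⟨?_, this.2⟩
  rw [this.1, one_mul]

lemma fP (H : Hyp n m δ Q f) : f Ppt = Ppt := by
  have h0 : Ppt ∈ bigCube Ppt δ := by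
    refine mem_UP.2 ?_
    have := H.hδ0
    simp [Ppt, abs_lt]; linarith
  rw [H.hlocP _ h0]; simp [Ppt]

lemma fQ (H : Hyp n m δ Q f) : f Q = Q := by
  have h0 : Q ∈ bigCube Q δ := by
    refine mem_UQ.2 ?_
    have := H.hδ0
    simp [abs_lt]; linarith
  rw [H.hlocQ _ h0]; simp

end Hyp

lemma pow_apply_succ (g : Equiv.Perm E3) (k : ℕ) (v : E3) :
    (g ^ (k + 1)) v = g ((g ^ k) v) := by
  rw [pow_succ']; rfl

lemma mem_W {v : E3} :
    v ∈ cycleNbhd f Q n m δ ↔ v ∈ bigCube Ppt δ ∨ v ∈ bigCube Q δ ∨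
      (∃ i, 1 ≤ i ∧ i < n ∧ ∃ w ∈ DeltaP δ, (f ^ i) w = v) ∨
      (∃ j, 1 ≤ j ∧ j < m ∧ ∃ w ∈ DeltaQ Q δ, (f ^ j) w = v) := by
  simp only [cycleNbhd, Set.mem_union, Set.mem_iUnion, Finset.mem_Ico, Set.mem_image,
    exists_prop]
  constructor
  · rintro (((h | h) | ⟨i, ⟨hi1, hi2⟩, w, hw, he⟩) | ⟨j, ⟨hj1, hj2⟩, w, hw, he⟩)
    · exact Or.inl h
    · exact Or.inr (Or.inl h)
    · exact Or.inr (Or.inr (Or.inl ⟨i, hi1, hi2, w, hw, he⟩))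
    · exact Or.inr (Or.inr (Or.inr ⟨j, hj1, hj2, w, hw, he⟩))
  · rintro (h | h | ⟨i, hi1, hi2, w, hw, he⟩ | ⟨j, hj1, hj2, w, hw, he⟩)
    · exact Or.inl (Or.inl (Or.inl h))
    · exact Or.inl (Or.inl (Or.inr h))
    · exact Or.inl (Or.inr ⟨i, ⟨hi1, hi2⟩, w, hw, he⟩)
    · exact Or.inr ⟨j, ⟨hj1, hj2⟩, w, hw, he⟩

lemma UP_sub_W : bigCube Ppt δ ⊆ cycleNbhd f Q n m δ := fun v hv =>
  mem_W.2 (Or.inl hv)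

lemma UQ_sub_W : bigCube Q δ ⊆ cycleNbhd f Q n m δ := fun v hv =>
  mem_W.2 (Or.inr (Or.inl hv))

theorem _root_.Equiv.Perm.apply_inv_self {α : Type*} (f : Equiv.Perm α) (x : α) :
    f (f⁻¹ x) = x :=
  f.apply_symm_apply x

namespace Hyp

lemma fnDP_mem_UQ (H : Hyp n m δ Q f) {w : E3} (hw : w ∈ DeltaP δ) :
    (f ^ n) w ∈ bigCube Q δ := by
  have hδ0 := H.hδ0
  have h4 : (1 : ℝ) ≤ 4 ^ n := one_le_pow₀ (by norm_num)
  have h4p : (0 : ℝ) < 4 ^ n := by positivity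
  have h4n := H.h4nδ
  obtain ⟨h1, h2, h3⟩ := (mem_DP).1 hw
  rw [(H.transP' hw).1]
  refine mem_UQ.2 ⟨?_, ?_, ?_⟩
  · rw [show (Q.1 + (w.1 - 2) - Q.1 : ℝ) = w.1 - 2 by ring, abs_lt]
    constructor <;> linarith
  · rw [show (Q.2.1 + w.2.1 / 4 ^ n - Q.2.1 : ℝ) = w.2.1 / 4 ^ n by ring, abs_div,
      abs_of_pos h4p, div_lt_iff₀ h4p, abs_lt]
    constructor <;> nlinarith [abs_nonneg w.2.1]
  · rw [show (Q.2.2 + 4 ^ n * w.2.2 - Q.2.2 : ℝ) = 4 ^ n * w.2.2 by ring, abs_mul,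
      abs_of_pos h4p]
    nlinarith [abs_le.2 ⟨h3.1, h3.2⟩, abs_nonneg w.2.2]

lemma fmDQ_mem_UP (H : Hyp n m δ Q f) {v : E3} (hv : v ∈ DeltaQ Q δ) :
    (f ^ m) v ∈ bigCube Ppt δ := by
  have hδ0 := H.hδ0
  have hδ1 := H.hδ1
  obtain ⟨h1, h2, h3⟩ := (mem_DQ).1 hv
  rw [(H.transQ' hv).1]
  refine mem_UP.2 ⟨?_, ?_, ?_⟩ <;> rw [abs_lt] <;> constructor <;> simp <;> linarith

lemma stepP (H : Hyp n m δ Q f) {v : E3} (hv : v ∈ bigCube Ppt δ)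
    (hfv : f v ∈ cycleNbhd f Q n m δ) : f v ∈ bigCube Ppt δ ∨ v ∈ DeltaP δ := by
  rcases mem_W.1 hfv with h | h | ⟨i, hi1, hin, w, hw, heq⟩ | ⟨j, hj1, hjm, w, hw, heq⟩
  · exact Or.inl h
  · exact absurd h (H.f_notUQ_of_UP hv)
  · rcases Nat.eq_or_lt_of_le hi1 with h1 | h1
    · right
      rw [← h1, pow_one] at heq
      rwa [← f.injective heq]
    · exfalso
      have hi : (f ^ i) w = f ((f ^ (i - 1)) w) := by
        conv_lhs => rw [show i = (i - 1) + 1 by omega]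
        exact pow_apply_succ f (i - 1) w
      rw [hi] at heq
      have hv' : v = (f ^ (i - 1)) w := f.injective heq.symm
      exact (H.transP' hw).2 (i - 1) (by omega) (by omega) (by rw [← hv']; exact Or.inl hv)
  · rcases Nat.eq_or_lt_of_le hj1 with h1 | h1
    · exfalso
      rw [← h1, pow_one] at heq
      have : v = w := f.injective heq.symm
      exact H.notUQ_of_UP hv (by rw [this]; exact H.DQsubUQ hw)
    · exfalso
      have hj : (f ^ j) w = f ((f ^ (j - 1)) w) := by
        conv_lhs => rw [show j = (j - 1) + 1 by omega]
        exact pow_apply_succ f (j - 1) w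
      rw [hj] at heq
      have hv' : v = (f ^ (j - 1)) w := f.injective heq.symm
      exact (H.transQ' hw).2 (j - 1) (by omega) (by omega) (by rw [← hv']; exact Or.inl hv)

lemma stepQ (H : Hyp n m δ Q f) {v : E3} (hv : v ∈ bigCube Q δ)
    (hfv : f v ∈ cycleNbhd f Q n m δ) : f v ∈ bigCube Q δ ∨ v ∈ DeltaQ Q δ := by
  rcases mem_W.1 hfv with h | h | ⟨i, hi1, hin, w, hw, heq⟩ | ⟨j, hj1, hjm, w, hw, heq⟩
  · exact absurd h (H.f_notUP_of_UQ hv)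
  · exact Or.inl h
  · rcases Nat.eq_or_lt_of_le hi1 with h1 | h1
    · exfalso
      rw [← h1, pow_one] at heq
      have : v = w := f.injective heq.symm
      have hvP : v ∈ bigCube Ppt δ := by rw [this]; exact H.DPsubUP hw
      exact H.notUQ_of_UP hvP hv
    · exfalso
      have hi : (f ^ i) w = f ((f ^ (i - 1)) w) := by
        conv_lhs => rw [show i = (i - 1) + 1 by omega]
        exact pow_apply_succ f (i - 1) w
      rw [hi] at heq
      have hv' : v = (f ^ (i - 1)) w := f.injective heq.symm
      exact (H.transP' hw).2 (i - 1) (by omega) (by omega) (by rw [← hv']; exact Or.inr hv)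
  · rcases Nat.eq_or_lt_of_le hj1 with h1 | h1
    · right
      rw [← h1, pow_one] at heq
      rwa [← f.injective heq]
    · exfalso
      have hj : (f ^ j) w = f ((f ^ (j - 1)) w) := by
        conv_lhs => rw [show j = (j - 1) + 1 by omega]
        exact pow_apply_succ f (j - 1) w
      rw [hj] at heq
      have hv' : v = (f ^ (j - 1)) w := f.injective heq.symm
      exact (H.transQ' hw).2 (j - 1) (by omega) (by omega) (by rw [← hv']; exact Or.inr hv)

lemma bstepP (H : Hyp n m δ Q f) {v : E3} (hv : v ∈ bigCube Ppt δ)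
    (hfv : f⁻¹ v ∈ cycleNbhd f Q n m δ) :
    f⁻¹ v ∈ bigCube Ppt δ ∨ ∃ w ∈ DeltaQ Q δ, (f ^ m) w = v := by
  rcases mem_W.1 hfv with h | h | ⟨i, hi1, hin, w, hw, heq⟩ | ⟨j, hj1, hjm, w, hw, heq⟩
  · exact Or.inl h
  · exact absurd (by rw [← Equiv.Perm.apply_inv_self f v]; exact ⟨_, h, rfl⟩ :
      v ∈ f '' bigCube Q δ) (fun hh => by
        have : v ∈ f '' bigCube Q δ ∩ bigCube Ppt δ := ⟨hh, hv⟩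
        rw [H.hdisjQP] at this; exact this)
  · -- v = f^(i+1) w
    have hv' : (f ^ (i + 1)) w = v := by
      rw [pow_apply_succ, heq, Equiv.Perm.apply_inv_self f]
    rcases Nat.lt_or_ge (i + 1) n with h1 | h1
    · exact absurd (Or.inl hv) (by rw [← hv']; exact (H.transP' hw).2 (i+1) (by omega) h1)
    · have hn : i + 1 = n := by omega
      rw [hn] at hv'
      exact absurd hv (fun _ => H.notUQ_of_UP hv (by rw [← hv']; exact H.fnDP_mem_UQ hw))
  · have hv' : (f ^ (j + 1)) w = v := by
      rw [pow_apply_succ, heq, Equiv.Perm.apply_inv_self f]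
    rcases Nat.lt_or_ge (j + 1) m with h1 | h1
    · exact absurd (Or.inl hv) (by rw [← hv']; exact (H.transQ' hw).2 (j+1) (by omega) h1)
    · have hm : j + 1 = m := by omega
      rw [hm] at hv'
      exact Or.inr ⟨w, hw, hv'⟩

lemma bstepQ (H : Hyp n m δ Q f) {v : E3} (hv : v ∈ bigCube Q δ)
    (hfv : f⁻¹ v ∈ cycleNbhd f Q n m δ) :
    f⁻¹ v ∈ bigCube Q δ ∨ ∃ w ∈ DeltaP δ, (f ^ n) w = v := by
  rcases mem_W.1 hfv with h | h | ⟨i, hi1, hin, w, hw, heq⟩ | ⟨j, hj1, hjm, w, hw, heq⟩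
  · exact absurd (by rw [← Equiv.Perm.apply_inv_self f v]; exact ⟨_, h, rfl⟩ :
      v ∈ f '' bigCube Ppt δ) (fun hh => by
        have : v ∈ f '' bigCube Ppt δ ∩ bigCube Q δ := ⟨hh, hv⟩
        rw [H.hdisjPQ] at this; exact this)
  · exact Or.inl h
  · have hv' : (f ^ (i + 1)) w = v := by
      rw [pow_apply_succ, heq, Equiv.Perm.apply_inv_self f]
    rcases Nat.lt_or_ge (i + 1) n with h1 | h1
    · exact absurd (Or.inr hv) (by rw [← hv']; exact (H.transP' hw).2 (i+1) (by omega) h1)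
    · have hn : i + 1 = n := by omega
      rw [hn] at hv'
      exact Or.inr ⟨w, hw, hv'⟩
  · have hv' : (f ^ (j + 1)) w = v := by
      rw [pow_apply_succ, heq, Equiv.Perm.apply_inv_self f]
    rcases Nat.lt_or_ge (j + 1) m with h1 | h1
    · exact absurd (Or.inr hv) (by rw [← hv']; exact (H.transQ' hw).2 (j+1) (by omega) h1)
    · have hm : j + 1 = m := by omega
      rw [hm] at hv'
      have : v ∈ bigCube Ppt δ := by rw [← hv']; exact H.fmDQ_mem_UP hw
      exact absurd hv (H.notUQ_of_UP this)

end Hyp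

lemma prodExt {p q : E3} (h1 : p.1 = q.1) (h2 : p.2.1 = q.2.1) (h3 : p.2.2 = q.2.2) :
    p = q := by
  obtain ⟨a, b, c⟩ := p; obtain ⟨d, e, g⟩ := q; simp_all

lemma escape {a r : ℝ} (ha : 2 ≤ a) (h : ∀ k : ℕ, |a ^ k * r| < 2) : r = 0 := by
  by_contra hr
  obtain ⟨k, hk⟩ := pow_unbounded_of_one_lt (2 / |r|) (show (1:ℝ) < a by linarith)
  have h0 : 0 < |r| := abs_pos.2 hr
  have h2 := h k
  rw [abs_mul, abs_of_pos (pow_pos (by linarith) k)] at h2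
  rw [div_lt_iff₀ h0] at hk
  linarith

namespace Hyp

lemma iterP (H : Hyp n m δ Q f) {v : E3} (k : ℕ)
    (hk : ∀ j, j < k → (f ^ j) v ∈ bigCube Ppt δ) :
    (f ^ k) v = (2 ^ k * v.1, v.2.1 / 4 ^ k, 4 ^ k * v.2.2) := by
  induction k with
  | zero => simp
  | succ k ih =>
    have hUP : (f ^ k) v ∈ bigCube Ppt δ := hk k (by omega)
    have hco := ih (fun j hj => hk j (by omega))
    rw [pow_apply_succ, hco, H.hlocP _ (hco ▸ hUP)]
    refine prodExt ?_ ?_ ?_ <;> simp <;> ring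

lemma iterQ (H : Hyp n m δ Q f) {v : E3} (k : ℕ)
    (hk : ∀ j, j < k → (f ^ j) v ∈ bigCube Q δ) :
    (f ^ k) v = (Q.1 + (v.1 - Q.1) / 2 ^ k, Q.2.1 + (v.2.1 - Q.2.1) / 4 ^ k,
      Q.2.2 + 4 ^ k * (v.2.2 - Q.2.2)) := by
  induction k with
  | zero => refine prodExt ?_ ?_ ?_ <;> simp
  | succ k ih =>
    have hUQ : (f ^ k) v ∈ bigCube Q δ := hk k (by omega)
    have hco := ih (fun j hj => hk j (by omega))
    rw [pow_apply_succ, hco, H.hlocQ _ (hco ▸ hUQ)]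
    refine prodExt ?_ ?_ ?_ <;> simp <;> ring

lemma biterP (H : Hyp n m δ Q f) {v : E3} (k : ℕ)
    (hk : ∀ j, j ≤ k → (f⁻¹ ^ j) v ∈ bigCube Ppt δ) :
    (f⁻¹ ^ k) v = (v.1 / 2 ^ k, 4 ^ k * v.2.1, v.2.2 / 4 ^ k) := by
  induction k with
  | zero => refine prodExt ?_ ?_ ?_ <;> simp
  | succ k ih =>
    have h1 := ih (fun j hj => hk j (by omega))
    have hw : (f⁻¹ ^ (k + 1)) v ∈ bigCube Ppt δ := hk _ le_rfl
    have hf : f ((f⁻¹ ^ (k + 1)) v) = (f⁻¹ ^ k) v := by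
      rw [pow_apply_succ f⁻¹ k v]; exact Equiv.Perm.apply_inv_self f _
    rw [H.hlocP _ hw, h1] at hf
    have e1 : 2 * ((f⁻¹ ^ (k + 1)) v).1 = v.1 / 2 ^ k := congrArg Prod.fst hf
    have e2 : ((f⁻¹ ^ (k + 1)) v).2.1 / 4 = 4 ^ k * v.2.1 :=
      congrArg (fun p : E3 => p.2.1) hf
    have e3 : 4 * ((f⁻¹ ^ (k + 1)) v).2.2 = v.2.2 / 4 ^ k :=
      congrArg (fun p : E3 => p.2.2) hf
    have p2 : (0:ℝ) < 2 ^ k := by positivity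
    have p4 : (0:ℝ) < 4 ^ k := by positivity
    have e1' : 2 * ((f⁻¹ ^ (k + 1)) v).1 * 2 ^ k = v.1 := (eq_div_iff (ne_of_gt p2)).1 e1
    have e3' : 4 * ((f⁻¹ ^ (k + 1)) v).2.2 * 4 ^ k = v.2.2 := (eq_div_iff (ne_of_gt p4)).1 e3
    refine prodExt ?_ ?_ ?_
    · rw [eq_div_iff (by positivity), show ((2:ℝ) ^ (k+1)) = 2 ^ k * 2 from pow_succ 2 k]
      linear_combination e1'
    · rw [show ((4:ℝ) ^ (k+1)) = 4 ^ k * 4 from pow_succ 4 k]; linear_combination 4 * e2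
    · rw [eq_div_iff (by positivity), show ((4:ℝ) ^ (k+1)) = 4 ^ k * 4 from pow_succ 4 k]
      linear_combination e3'

lemma biterQ (H : Hyp n m δ Q f) {v : E3} (k : ℕ)
    (hk : ∀ j, j ≤ k → (f⁻¹ ^ j) v ∈ bigCube Q δ) :
    (f⁻¹ ^ k) v = (Q.1 + 2 ^ k * (v.1 - Q.1), Q.2.1 + 4 ^ k * (v.2.1 - Q.2.1),
      Q.2.2 + (v.2.2 - Q.2.2) / 4 ^ k) := by
  induction k with
  | zero => refine prodExt ?_ ?_ ?_ <;> simp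
  | succ k ih =>
    have h1 := ih (fun j hj => hk j (by omega))
    have hw : (f⁻¹ ^ (k + 1)) v ∈ bigCube Q δ := hk _ le_rfl
    have hf : f ((f⁻¹ ^ (k + 1)) v) = (f⁻¹ ^ k) v := by
      rw [pow_apply_succ f⁻¹ k v]; exact Equiv.Perm.apply_inv_self f _
    rw [H.hlocQ _ hw, h1] at hf
    have e1 : Q.1 + (((f⁻¹ ^ (k + 1)) v).1 - Q.1) / 2 = Q.1 + 2 ^ k * (v.1 - Q.1) :=
      congrArg Prod.fst hf
    have e2 : Q.2.1 + (((f⁻¹ ^ (k + 1)) v).2.1 - Q.2.1) / 4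
        = Q.2.1 + 4 ^ k * (v.2.1 - Q.2.1) := congrArg (fun p : E3 => p.2.1) hf
    have e3 : Q.2.2 + 4 * (((f⁻¹ ^ (k + 1)) v).2.2 - Q.2.2)
        = Q.2.2 + (v.2.2 - Q.2.2) / 4 ^ k := congrArg (fun p : E3 => p.2.2) hf
    have p4 : (0:ℝ) < 4 ^ k := by positivity
    have e3'' : 4 * (((f⁻¹ ^ (k + 1)) v).2.2 - Q.2.2) = (v.2.2 - Q.2.2) / 4 ^ k := by
      linarith
    have e3' : (4 * (((f⁻¹ ^ (k + 1)) v).2.2 - Q.2.2)) * 4 ^ k = v.2.2 - Q.2.2 :=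
      (eq_div_iff (ne_of_gt p4)).1 e3''
    refine prodExt ?_ ?_ ?_
    · rw [show ((2:ℝ) ^ (k+1)) = 2 ^ k * 2 from pow_succ 2 k]; linear_combination 2 * e1
    · rw [show ((4:ℝ) ^ (k+1)) = 4 ^ k * 4 from pow_succ 4 k]; linear_combination 4 * e2
    · have hgoal : ((f⁻¹ ^ (k + 1)) v).2.2 - Q.2.2 = (v.2.2 - Q.2.2) / 4 ^ (k + 1) := by
        rw [eq_div_iff (by positivity), show ((4:ℝ) ^ (k+1)) = 4 ^ k * 4 from pow_succ 4 k]
        linear_combination e3'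
      show ((f⁻¹ ^ (k + 1)) v).2.2 = Q.2.2 + (v.2.2 - Q.2.2) / 4 ^ (k + 1)
      linarith

lemma fwdP (H : Hyp n m δ Q f) {v : E3} (hv : v ∈ bigCube Ppt δ)
    (hWf : ∀ k : ℕ, (f ^ k) v ∈ cycleNbhd f Q n m δ) :
    (v.1 = 0 ∧ v.2.2 = 0) ∨
      ∃ k, (f ^ k) v ∈ DeltaP δ ∧ (f ^ k) v = (2 ^ k * v.1, v.2.1 / 4 ^ k, 4 ^ k * v.2.2) := by
  classical
  have hδ1 := H.hδ1
  by_cases hstay : ∀ k : ℕ, (f ^ k) v ∈ bigCube Ppt δ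
  · left
    have hco : ∀ k, (f ^ k) v = (2 ^ k * v.1, v.2.1 / 4 ^ k, 4 ^ k * v.2.2) :=
      fun k => H.iterP k (fun j _ => hstay j)
    constructor
    · refine escape (a := 2) (by norm_num) (fun k => ?_)
      have h1 := (mem_UP.1 (hco k ▸ hstay k)).1
      simp only at h1; linarith
    · refine escape (a := 4) (by norm_num) (fun k => ?_)
      have h1 := (mem_UP.1 (hco k ▸ hstay k)).2.2
      simp only at h1; linarith
  · right
    push_neg at hstay
    have h0 : ¬ ((f ^ 0) v ∉ bigCube Ppt δ) := by simpa using hv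
    obtain ⟨k, hk, hmin⟩ := Nat.findX hstay
    have hkpos : k ≠ 0 := fun h => h0 (h ▸ hk)
    obtain ⟨k', rfl⟩ : ∃ k', k = k' + 1 := ⟨k - 1, by omega⟩
    have hall : ∀ j, j < k' + 1 → (f ^ j) v ∈ bigCube Ppt δ :=
      fun j hj => not_not.1 (fun hne => hmin j hj hne)
    have hv' : (f ^ k') v ∈ bigCube Ppt δ := hall k' (by omega)
    have hst := H.stepP hv' (by rw [← pow_apply_succ]; exact hWf (k' + 1))
    rw [← pow_apply_succ] at hst
    rcases hst with h | h
    · exact absurd h hk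
    · exact ⟨k', h, H.iterP k' (fun j hj => hall j (by omega))⟩

lemma fwdQ (H : Hyp n m δ Q f) {v : E3} (hv : v ∈ bigCube Q δ)
    (hWf : ∀ k : ℕ, (f ^ k) v ∈ cycleNbhd f Q n m δ) :
    v.2.2 - Q.2.2 = 0 ∨
      ∃ k, (f ^ k) v ∈ DeltaQ Q δ ∧ (f ^ k) v = (Q.1 + (v.1 - Q.1) / 2 ^ k,
        Q.2.1 + (v.2.1 - Q.2.1) / 4 ^ k, Q.2.2 + 4 ^ k * (v.2.2 - Q.2.2)) := by
  classical
  have hδ1 := H.hδ1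
  by_cases hstay : ∀ k : ℕ, (f ^ k) v ∈ bigCube Q δ
  · left
    have hco : ∀ k, (f ^ k) v = (Q.1 + (v.1 - Q.1) / 2 ^ k, Q.2.1 + (v.2.1 - Q.2.1) / 4 ^ k,
        Q.2.2 + 4 ^ k * (v.2.2 - Q.2.2)) := fun k => H.iterQ k (fun j _ => hstay j)
    refine escape (a := 4) (by norm_num) (fun k => ?_)
    have h1 := (mem_UQ.1 (hco k ▸ hstay k)).2.2
    simp only at h1
    rw [show (Q.2.2 + 4 ^ k * (v.2.2 - Q.2.2) - Q.2.2 : ℝ) = 4 ^ k * (v.2.2 - Q.2.2)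
      by ring] at h1
    linarith
  · right
    push_neg at hstay
    have h0 : ¬ ((f ^ 0) v ∉ bigCube Q δ) := by simpa using hv
    obtain ⟨k, hk, hmin⟩ := Nat.findX hstay
    have hkpos : k ≠ 0 := fun h => h0 (h ▸ hk)
    obtain ⟨k', rfl⟩ : ∃ k', k = k' + 1 := ⟨k - 1, by omega⟩
    have hall : ∀ j, j < k' + 1 → (f ^ j) v ∈ bigCube Q δ :=
      fun j hj => not_not.1 (fun hne => hmin j hj hne)
    have hv' : (f ^ k') v ∈ bigCube Q δ := hall k' (by omega)
    have hst := H.stepQ hv' (by rw [← pow_apply_succ]; exact hWf (k' + 1))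
    rw [← pow_apply_succ] at hst
    rcases hst with h | h
    · exact absurd h hk
    · exact ⟨k', h, H.iterQ k' (fun j hj => hall j (by omega))⟩

lemma bwdP (H : Hyp n m δ Q f) {v : E3} (hv : v ∈ bigCube Ppt δ)
    (hWb : ∀ k : ℕ, (f⁻¹ ^ k) v ∈ cycleNbhd f Q n m δ) :
    v.2.1 = 0 ∨
      ∃ k, ∃ w ∈ DeltaQ Q δ, (f ^ m) w = (f⁻¹ ^ k) v ∧
        (f⁻¹ ^ k) v = (v.1 / 2 ^ k, 4 ^ k * v.2.1, v.2.2 / 4 ^ k) := by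
  classical
  have hδ1 := H.hδ1
  by_cases hstay : ∀ k : ℕ, (f⁻¹ ^ k) v ∈ bigCube Ppt δ
  · left
    have hco : ∀ k, (f⁻¹ ^ k) v = (v.1 / 2 ^ k, 4 ^ k * v.2.1, v.2.2 / 4 ^ k) :=
      fun k => H.biterP k (fun j _ => hstay j)
    refine escape (a := 4) (by norm_num) (fun k => ?_)
    have h1 := (mem_UP.1 (hco k ▸ hstay k)).2.1
    simp only at h1; linarith
  · right
    push_neg at hstay
    have h0 : ¬ ((f⁻¹ ^ 0) v ∉ bigCube Ppt δ) := by simpa using hv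
    obtain ⟨k, hk, hmin⟩ := Nat.findX hstay
    have hkpos : k ≠ 0 := fun h => h0 (h ▸ hk)
    obtain ⟨k', rfl⟩ : ∃ k', k = k' + 1 := ⟨k - 1, by omega⟩
    have hall : ∀ j, j < k' + 1 → (f⁻¹ ^ j) v ∈ bigCube Ppt δ :=
      fun j hj => not_not.1 (fun hne => hmin j hj hne)
    have hv' : (f⁻¹ ^ k') v ∈ bigCube Ppt δ := hall k' (by omega)
    have hst := H.bstepP hv' (by rw [← pow_apply_succ]; exact hWb (k' + 1))
    rw [← pow_apply_succ] at hst
    rcases hst with h | ⟨w, hw, he⟩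
    · exact absurd h hk
    · exact ⟨k', w, hw, he, H.biterP k' (fun j hj => hall j (by omega))⟩

lemma bwdQ (H : Hyp n m δ Q f) {v : E3} (hv : v ∈ bigCube Q δ)
    (hWb : ∀ k : ℕ, (f⁻¹ ^ k) v ∈ cycleNbhd f Q n m δ) :
    (v.1 - Q.1 = 0 ∧ v.2.1 - Q.2.1 = 0) ∨
      ∃ k, ∃ w ∈ DeltaP δ, (f ^ n) w = (f⁻¹ ^ k) v ∧
        (f⁻¹ ^ k) v = (Q.1 + 2 ^ k * (v.1 - Q.1), Q.2.1 + 4 ^ k * (v.2.1 - Q.2.1),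
          Q.2.2 + (v.2.2 - Q.2.2) / 4 ^ k) := by
  classical
  have hδ1 := H.hδ1
  by_cases hstay : ∀ k : ℕ, (f⁻¹ ^ k) v ∈ bigCube Q δ
  · left
    have hco : ∀ k, (f⁻¹ ^ k) v = (Q.1 + 2 ^ k * (v.1 - Q.1), Q.2.1 + 4 ^ k * (v.2.1 - Q.2.1),
        Q.2.2 + (v.2.2 - Q.2.2) / 4 ^ k) := fun k => H.biterQ k (fun j _ => hstay j)
    constructor
    · refine escape (a := 2) (by norm_num) (fun k => ?_)
      have h1 := (mem_UQ.1 (hco k ▸ hstay k)).1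
      simp only at h1
      rw [show (Q.1 + 2 ^ k * (v.1 - Q.1) - Q.1 : ℝ) = 2 ^ k * (v.1 - Q.1) by ring] at h1
      linarith
    · refine escape (a := 4) (by norm_num) (fun k => ?_)
      have h1 := (mem_UQ.1 (hco k ▸ hstay k)).2.1
      simp only at h1
      rw [show (Q.2.1 + 4 ^ k * (v.2.1 - Q.2.1) - Q.2.1 : ℝ) = 4 ^ k * (v.2.1 - Q.2.1)
        by ring] at h1
      linarith
  · right
    push_neg at hstay
    have h0 : ¬ ((f⁻¹ ^ 0) v ∉ bigCube Q δ) := by simpa using hv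
    obtain ⟨k, hk, hmin⟩ := Nat.findX hstay
    have hkpos : k ≠ 0 := fun h => h0 (h ▸ hk)
    obtain ⟨k', rfl⟩ : ∃ k', k = k' + 1 := ⟨k - 1, by omega⟩
    have hall : ∀ j, j < k' + 1 → (f⁻¹ ^ j) v ∈ bigCube Q δ :=
      fun j hj => not_not.1 (fun hne => hmin j hj hne)
    have hv' : (f⁻¹ ^ k') v ∈ bigCube Q δ := hall k' (by omega)
    have hst := H.bstepQ hv' (by rw [← pow_apply_succ]; exact hWb (k' + 1))
    rw [← pow_apply_succ] at hst
    rcases hst with h | ⟨w, hw, he⟩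
    · exact absurd h hk
    · exact ⟨k', w, hw, he, H.biterQ k' (fun j hj => hall j (by omega))⟩

end Hyp

lemma zpow_comp (f : Equiv.Perm E3) (a b : ℤ) (u : E3) :
    (f ^ a) ((f ^ b) u) = (f ^ (a + b)) u := by
  rw [zpow_add]; rfl

lemma npow_eq_zpow (f : Equiv.Perm E3) (k : ℕ) (u : E3) :
    (f ^ k) u = (f ^ (k : ℤ)) u := by rw [zpow_natCast]

lemma inv_npow_eq_zpow (f : Equiv.Perm E3) (k : ℕ) (u : E3) :
    (f⁻¹ ^ k) u = (f ^ (-(k : ℤ))) u := by rw [zpow_neg, zpow_natCast, ← inv_pow]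

lemma shiftOrbit {u : E3} (hOrb : ∀ k : ℤ, (f ^ k) u ∈ cycleNbhd f Q n m δ)
    {v : E3} (b : ℤ) (hv : v = (f ^ b) u) :
    (∀ k : ℕ, (f ^ k) v ∈ cycleNbhd f Q n m δ) ∧
    (∀ k : ℕ, (f⁻¹ ^ k) v ∈ cycleNbhd f Q n m δ) := by
  constructor
  · intro k; rw [hv, npow_eq_zpow, zpow_comp]; exact hOrb _
  · intro k; rw [hv, inv_npow_eq_zpow, zpow_comp]; exact hOrb _

namespace Hyp

/-- From an orbit point in `Δ_Q` whose backward orbit exits `U_Q` through `f^n Δ_P`,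
or more generally any point of `U_P`-arrival with negative `x`-coordinate, the forward
orbit cannot stay in `W`. -/
lemma noReturn (H : Hyp n m δ Q f) {p : E3} (hp : p ∈ bigCube Ppt δ) (hneg : p.1 < 0)
    (hWf : ∀ k : ℕ, (f ^ k) p ∈ cycleNbhd f Q n m δ) : False := by
  have hδ1 := H.hδ1
  rcases H.fwdP hp hWf with ⟨h1, _⟩ | ⟨k, hkD, hkco⟩
  · linarith
  · have h2k : (0:ℝ) < 2 ^ k := by positivity
    have hge := (mem_DP.1 (hkco ▸ hkD)).1.1
    simp only at hge
    nlinarith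

lemma CQ (H : Hyp n m δ Q f) {u : E3} (hOrb : ∀ k : ℤ, (f ^ k) u ∈ cycleNbhd f Q n m δ)
    (hu : u ∈ DeltaQ Q δ) : u = aPt Q := by
  have hδ1 := H.hδ1
  obtain ⟨h1, h2, h3⟩ := mem_DQ.1 hu
  obtain ⟨hWf, hWb⟩ := shiftOrbit hOrb (v := u) 0 (by simp)
  have hfm := (H.transQ' hu).1
  have hpUP : (f ^ m) u ∈ bigCube Ppt δ := H.fmDQ_mem_UP hu
  have hWfp : ∀ k : ℕ, (f ^ k) ((f ^ m) u) ∈ cycleNbhd f Q n m δ :=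
    (shiftOrbit hOrb (m : ℤ) (npow_eq_zpow f m u)).1
  have hp1 : ((f ^ m) u).1 = u.1 - Q.1 := by rw [hfm]
  rcases H.bwdQ (H.DQsubUQ hu) hWb with ⟨hX, hY⟩ | ⟨k, w, hw, he, hco⟩
  · -- backward stays in U_Q forever: x- and y-offsets vanish
    rcases H.fwdP hpUP hWfp with ⟨_, hz⟩ | ⟨k, hkD, hkco⟩
    · -- forward from P-arrival stays: z-offset vanishes as well
      have hz' : ((f ^ m) u).2.2 = 4 * (u.2.2 - Q.2.2 + 1) := by rw [hfm]
      rw [hz'] at hz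
      refine prodExt ?_ ?_ ?_
      · show u.1 = Q.1; linarith
      · show u.2.1 = Q.2.1; linarith
      · show u.2.2 = Q.2.2 - 1; linarith
    · exfalso
      have hge := (mem_DP.1 (hkco ▸ hkD)).1.1
      simp only at hge
      rw [hp1, hX] at hge
      simp at hge
      linarith
  · -- backward exits through `f^n Δ_P`: the x-offset is negative, contradiction
    exfalso
    have hwn := (H.transP' hw).1
    have e : Q.1 + (w.1 - 2) = Q.1 + 2 ^ k * (u.1 - Q.1) :=
      congrArg Prod.fst (hwn ▸ hco ▸ he)
    have hw1 : w.1 ≤ 1 + δ := (mem_DP.1 hw).1.2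
    have h2k : (0:ℝ) < 2 ^ k := by positivity
    have h2k1 : (1:ℝ) ≤ 2 ^ k := one_le_pow₀ (by norm_num)
    have hXneg : u.1 - Q.1 < 0 := by nlinarith
    exact H.noReturn hpUP (by rw [hp1]; exact hXneg) hWfp

lemma CP (H : Hyp n m δ Q f) {u : E3} (hOrb : ∀ k : ℤ, (f ^ k) u ∈ cycleNbhd f Q n m δ)
    (hu : u ∈ DeltaP δ) : u ∈ gammaSeg δ := by
  have hδ1 := H.hδ1
  obtain ⟨h1, h2, h3⟩ := mem_DP.1 hu
  obtain ⟨hWf, hWb⟩ := shiftOrbit hOrb (v := u) 0 (by simp)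
  -- z-coordinate vanishes, via the forward orbit
  have hqco := (H.transP' hu).1
  have hqUQ : (f ^ n) u ∈ bigCube Q δ := H.fnDP_mem_UQ hu
  have hWfq : ∀ k : ℕ, (f ^ k) ((f ^ n) u) ∈ cycleNbhd f Q n m δ :=
    (shiftOrbit hOrb (n : ℤ) (npow_eq_zpow f n u)).1
  have hz : u.2.2 = 0 := by
    rcases H.fwdQ hqUQ hWfq with hq3 | ⟨k, hkD, hkco⟩
    · have e : ((f ^ n) u).2.2 = Q.2.2 + 4 ^ n * u.2.2 := by rw [hqco]
      have h4n : (0:ℝ) < 4 ^ n := by positivity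
      rw [e] at hq3
      have : (4:ℝ) ^ n * u.2.2 = 0 := by linarith
      exact (mul_eq_zero.1 this).resolve_left (ne_of_gt h4n)
    · -- the orbit would enter `Δ_Q` with negative x-offset and return: impossible
      exfalso
      set v₁ := (f ^ k) ((f ^ n) u) with hv₁
      have hv₁D : v₁ ∈ DeltaQ Q δ := hkD
      have hx1 : v₁.1 = Q.1 + (((f ^ n) u).1 - Q.1) / 2 ^ k := by rw [hkco]
      have hq1 : ((f ^ n) u).1 = Q.1 + (u.1 - 2) := by rw [hqco]
      have h2k : (0:ℝ) < 2 ^ k := by positivity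
      have hXneg : v₁.1 - Q.1 < 0 := by
        rw [hx1, hq1]
        have : u.1 - 2 < 0 := by linarith
        have : (Q.1 + (u.1 - 2) - Q.1) / 2 ^ k < 0 := by
          apply div_neg_of_neg_of_pos (by linarith) h2k
        linarith
      have hfm := (H.transQ' hv₁D).1
      have hpUP : (f ^ m) v₁ ∈ bigCube Ppt δ := H.fmDQ_mem_UP hv₁D
      have hveq : v₁ = (f ^ ((k : ℤ) + (n : ℤ))) u := by
        rw [hv₁, npow_eq_zpow f n u, npow_eq_zpow f k _, zpow_comp]
      have hWfp : ∀ j : ℕ, (f ^ j) ((f ^ m) v₁) ∈ cycleNbhd f Q n m δ :=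
        (shiftOrbit hOrb ((m : ℤ) + ((k : ℤ) + (n : ℤ)))
          (by rw [npow_eq_zpow f m v₁, hveq, zpow_comp])).1
      have hp1 : ((f ^ m) v₁).1 = v₁.1 - Q.1 := by rw [hfm]
      exact H.noReturn hpUP (by rw [hp1]; exact hXneg) hWfp
  -- y-coordinate vanishes, via the backward orbit
  have hy : u.2.1 = 0 := by
    rcases H.bwdP (H.DPsubUP hu) hWb with hy | ⟨k, w, hw, he, hco⟩
    · exact hy
    · exfalso
      have hfm := (H.transQ' hw).1
      have e1 : w.1 - Q.1 = u.1 / 2 ^ k := by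
        have := congrArg Prod.fst (hfm.symm.trans (he.trans hco))
        simpa using this
      have h2k : (0:ℝ) < 2 ^ k := by positivity
      have hXpos : 0 < w.1 - Q.1 := by
        rw [e1]; apply div_pos (by linarith) h2k
      -- w is an orbit point: w = f^{-(k+m)} u
      have hez : (f ^ (m : ℤ)) w = (f ^ (-(k : ℤ))) u := by
        rw [← npow_eq_zpow, he, inv_npow_eq_zpow]
      have hweq : w = (f ^ (-(m : ℤ) + -(k : ℤ))) u := by
        have : (f ^ (-(m : ℤ))) ((f ^ (m : ℤ)) w) = w := by
          rw [zpow_comp]; simp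
        rw [← this, hez, zpow_comp]
      have hWbw : ∀ j : ℕ, (f⁻¹ ^ j) w ∈ cycleNbhd f Q n m δ :=
        (shiftOrbit hOrb _ hweq).2
      rcases H.bwdQ (H.DQsubUQ hw) hWbw with ⟨hX, _⟩ | ⟨l, w', hw', he', hco'⟩
      · linarith
      · have hwn := (H.transP' hw').1
        have e : Q.1 + (w'.1 - 2) = Q.1 + 2 ^ l * (w.1 - Q.1) :=
          congrArg Prod.fst (hwn ▸ hco' ▸ he')
        have hw1 : w'.1 ≤ 1 + δ := (mem_DP.1 hw').1.2
        have h2l : (0:ℝ) < 2 ^ l := by positivity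
        have h2l1 : (1:ℝ) ≤ 2 ^ l := one_le_pow₀ (by norm_num)
        nlinarith
  exact ⟨⟨h1.1, h1.2⟩, hy, hz⟩

end Hyp

lemma perm_symm_zpow (f : Equiv.Perm E3) (k : ℤ) : (f ^ k).symm = f ^ (-k) := by
  rw [← Equiv.Perm.inv_def, ← zpow_neg]

lemma mem_maxInv {u : E3} :
    u ∈ maxInvSet f Q n m δ ↔ ∀ k : ℤ, (f ^ k) u ∈ cycleNbhd f Q n m δ := by
  simp only [maxInvSet, Set.mem_iInter]
  constructor
  · intro h k
    have h2 := h (-k)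
    rw [Equiv.image_eq_preimage_symm, perm_symm_zpow, neg_neg] at h2
    exact h2
  · intro h k
    rw [Equiv.image_eq_preimage_symm, perm_symm_zpow]
    exact h (-k)

lemma orbShift {u v : E3} (hOrb : ∀ k : ℤ, (f ^ k) u ∈ cycleNbhd f Q n m δ)
    (b : ℤ) (hv : v = (f ^ b) u) : ∀ k : ℤ, (f ^ k) v ∈ cycleNbhd f Q n m δ :=
  fun k => by rw [hv, zpow_comp]; exact hOrb _

lemma eq_shift_of_pow_eq {w u : E3} (a : ℕ) (he : (f ^ a) w = u) :
    w = (f ^ (-(a : ℤ))) u := by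
  subst he
  rw [npow_eq_zpow f a w, zpow_comp]
  simp

lemma eq_shift_of_pow_eq_invpow {w u : E3} (a b : ℕ) (he : (f ^ a) w = (f⁻¹ ^ b) u) :
    w = (f ^ (-(a : ℤ) + -(b : ℤ))) u := by
  have hez : (f ^ (a : ℤ)) w = (f ^ (-(b : ℤ))) u := by
    rw [zpow_natCast, he, inv_npow_eq_zpow]
  have h0 : (f ^ (-(a : ℤ))) ((f ^ (a : ℤ)) w) = w := by rw [zpow_comp]; simp
  rw [← h0, hez, zpow_comp]

lemma shift_eq_of_pow_eq_invpow {w u : E3} (a b : ℕ) (he : (f ^ a) w = (f⁻¹ ^ b) u) :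
    (f ^ ((b : ℤ) + (a : ℤ))) w = u := by
  have hez : (f ^ (a : ℤ)) w = (f ^ (-(b : ℤ))) u := by
    rw [zpow_natCast, he, inv_npow_eq_zpow]
  have := congrArg (f ^ (b : ℤ)) hez
  rw [zpow_comp, zpow_comp] at this
  simpa using this

namespace Hyp

lemma lam_sub (H : Hyp n m δ Q f) {u : E3}
    (hOrb : ∀ k : ℤ, (f ^ k) u ∈ cycleNbhd f Q n m δ) :
    u = Ppt ∨ u = Q ∨ (∃ k : ℤ, ∃ s ∈ gammaSeg δ, (f ^ k) s = u) ∨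
      (∃ k : ℤ, (f ^ k) (aPt Q) = u) := by
  obtain ⟨hWf, hWb⟩ := shiftOrbit hOrb (v := u) 0 (by simp)
  have huW : u ∈ cycleNbhd f Q n m δ := by have := hOrb 0; simpa using this
  have hγ : ∀ w : E3, w ∈ DeltaP δ → (∀ k : ℤ, (f ^ k) w ∈ cycleNbhd f Q n m δ) →
      ∀ c : ℤ, (f ^ c) w = u → ∃ k : ℤ, ∃ s ∈ gammaSeg δ, (f ^ k) s = u :=
    fun w hw hOw c hc => ⟨c, w, H.CP hOw hw, hc⟩
  have ha : ∀ w : E3, w ∈ DeltaQ Q δ → (∀ k : ℤ, (f ^ k) w ∈ cycleNbhd f Q n m δ) →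
      ∀ c : ℤ, (f ^ c) w = u → ∃ k : ℤ, (f ^ k) (aPt Q) = u :=
    fun w hw hOw c hc => ⟨c, by rw [← H.CQ hOw hw]; exact hc⟩
  rcases mem_W.1 huW with hu | hu | ⟨i, hi1, hin, w, hw, heq⟩ | ⟨j, hj1, hjm, w, hw, heq⟩
  · -- u ∈ U_P
    rcases H.fwdP hu hWf with ⟨hx, hz⟩ | ⟨k, hkD, hkco⟩
    · rcases H.bwdP hu hWb with hy | ⟨k, w, hw, he, hco⟩
      · left
        exact prodExt hx hy hz
      · -- u lies on the orbit of a point of Δ_Q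
        right; right; right
        refine ha w hw (orbShift hOrb _ (eq_shift_of_pow_eq_invpow m k he)) _
          (shift_eq_of_pow_eq_invpow m k he)
    · -- u lies on the orbit of a point of Δ_P
      right; right; left
      refine ⟨-(k : ℤ), (f ^ k) u, H.CP (orbShift hOrb (k : ℤ) (npow_eq_zpow f k u)) hkD, ?_⟩
      rw [npow_eq_zpow f k u, zpow_comp]; simp
  · -- u ∈ U_Q
    rcases H.fwdQ hu hWf with hz | ⟨k, hkD, hkco⟩
    · rcases H.bwdQ hu hWb with ⟨hX, hY⟩ | ⟨k, w, hw, he, hco⟩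
      · right; left
        refine prodExt ?_ ?_ ?_ <;> [skip; skip; skip] <;> linarith
      · right; right; left
        refine hγ w hw (orbShift hOrb _ (eq_shift_of_pow_eq_invpow n k he)) _
          (shift_eq_of_pow_eq_invpow n k he)
    · right; right; right
      refine ⟨-(k : ℤ), ?_⟩
      rw [← H.CQ (orbShift hOrb (k : ℤ) (npow_eq_zpow f k u)) hkD]
      rw [npow_eq_zpow f k u, zpow_comp]; simp
  · right; right; left
    exact hγ w hw (orbShift hOrb _ (eq_shift_of_pow_eq i heq)) (i : ℤ)
      (by rw [← heq, npow_eq_zpow])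
  · right; right; right
    exact ha w hw (orbShift hOrb _ (eq_shift_of_pow_eq j heq)) (j : ℤ)
      (by rw [← heq, npow_eq_zpow])

end Hyp

namespace Hyp

lemma gamma_sub_DP (H : Hyp n m δ Q f) {s : E3} (hs : s ∈ gammaSeg δ) : s ∈ DeltaP δ := by
  have hδ0 := H.hδ0
  obtain ⟨h1, h2, h3⟩ := hs
  exact mem_DP.2 ⟨⟨h1.1, h1.2⟩, by rw [h2]; constructor <;> linarith,
    by rw [h3]; constructor <;> linarith⟩

lemma aPt_mem_DQ (H : Hyp n m δ Q f) : aPt Q ∈ DeltaQ Q δ := by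
  have hδ0 := H.hδ0
  refine mem_DQ.2 ⟨?_, ?_, ?_⟩ <;> simp [aPt] <;> linarith

lemma gamma_bwd (H : Hyp n m δ Q f) {s : E3} (hs : s ∈ gammaSeg δ) (k : ℕ) :
    (f⁻¹ ^ k) s = (s.1 / 2 ^ k, 0, 0) ∧ (f⁻¹ ^ k) s ∈ bigCube Ppt δ := by
  have hδ0 := H.hδ0
  have hδ1 := H.hδ1
  obtain ⟨h1, h2, h3⟩ := hs
  obtain ⟨h1a, h1b⟩ := Set.mem_Icc.1 h1
  have hmem : ∀ j : ℕ, ((s.1 / 2 ^ j, 0, 0) : E3) ∈ bigCube Ppt δ := by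
    intro j
    have h2j : (1:ℝ) ≤ 2 ^ j := one_le_pow₀ (by norm_num)
    have h2jp : (0:ℝ) < 2 ^ j := by positivity
    refine mem_UP.2 ⟨?_, ?_, ?_⟩
    · rw [abs_div, abs_of_pos h2jp, div_lt_iff₀ h2jp, abs_lt]
      constructor <;> nlinarith [h1a, h1b]
    · simpa using by linarith
    · simpa using by linarith
  induction k with
  | zero =>
    have h0 : (f⁻¹ ^ 0) s = s := by simp
    rw [h0]
    constructor
    · refine prodExt ?_ ?_ ?_ <;> simp [h2, h3]
    · have hh : ((s.1, 0, 0) : E3) ∈ bigCube Ppt δ := by simpa using hmem 0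
      rwa [show ((s.1, 0, 0) : E3) = s from prodExt rfl h2.symm h3.symm] at hh
  | succ k ih =>
    have hstep : f ((s.1 / 2 ^ (k + 1), 0, 0) : E3) = ((s.1 / 2 ^ k, 0, 0) : E3) := by
      rw [H.hlocP _ (hmem (k + 1))]
      refine prodExt ?_ ?_ ?_ <;> simp
      rw [show ((2:ℝ) ^ (k+1)) = 2 ^ k * 2 from pow_succ 2 k]
      field_simp
    have : (f⁻¹ ^ (k + 1)) s = f⁻¹ ((f⁻¹ ^ k) s) := pow_apply_succ f⁻¹ k s
    rw [this, ih.1, ← hstep]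
    refine ⟨?_, ?_⟩
    · show f⁻¹ (f _) = _; simp
    · show f⁻¹ (f _) ∈ _; simpa using hmem (k + 1)

lemma gamma_fwd (H : Hyp n m δ Q f) {s : E3} (hs : s ∈ gammaSeg δ) (j : ℕ) :
    (f ^ (n + j)) s = (Q.1 + (s.1 - 2) / 2 ^ j, Q.2.1, Q.2.2) ∧
      (f ^ (n + j)) s ∈ bigCube Q δ := by
  have hδ0 := H.hδ0
  have hδ1 := H.hδ1
  obtain ⟨h1, h2, h3⟩ := hs
  obtain ⟨h1a, h1b⟩ := Set.mem_Icc.1 h1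
  have hmem : ∀ i : ℕ, ((Q.1 + (s.1 - 2) / 2 ^ i, Q.2.1, Q.2.2) : E3) ∈ bigCube Q δ := by
    intro i
    have h2i : (1:ℝ) ≤ 2 ^ i := one_le_pow₀ (by norm_num)
    have h2ip : (0:ℝ) < 2 ^ i := by positivity
    refine mem_UQ.2 ⟨?_, ?_, ?_⟩
    · rw [show (Q.1 + (s.1 - 2) / 2 ^ i - Q.1 : ℝ) = (s.1 - 2) / 2 ^ i by ring,
        abs_div, abs_of_pos h2ip, div_lt_iff₀ h2ip, abs_lt]
      constructor <;> nlinarith [h1a, h1b]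
    · simpa using by linarith
    · simpa using by linarith
  induction j with
  | zero =>
    have h0 := (H.transP' (H.gamma_sub_DP ⟨h1, h2, h3⟩)).1
    rw [Nat.add_zero, h0]
    constructor
    · refine prodExt ?_ ?_ ?_ <;> simp [h2, h3]
    · have := hmem 0
      simp only [pow_zero, div_one] at this ⊢
      rw [h2, h3]
      simpa using this
  | succ j ih =>
    have hstep : f ((Q.1 + (s.1 - 2) / 2 ^ j, Q.2.1, Q.2.2) : E3)
        = ((Q.1 + (s.1 - 2) / 2 ^ (j + 1), Q.2.1, Q.2.2) : E3) := by
      rw [H.hlocQ _ (hmem j)]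
      refine prodExt ?_ ?_ ?_ <;> simp
      rw [show ((2:ℝ) ^ (j+1)) = 2 ^ j * 2 from pow_succ 2 j]
      ring
    have hpow : (f ^ (n + (j + 1))) s = f ((f ^ (n + j)) s) := pow_apply_succ f (n + j) s
    rw [hpow, ih.1, hstep]
    exact ⟨rfl, hmem (j + 1)⟩

lemma gamma_orbit (H : Hyp n m δ Q f) {s : E3} (hs : s ∈ gammaSeg δ) (k : ℤ) :
    (f ^ k) s ∈ cycleNbhd f Q n m δ := by
  obtain ⟨j, rfl | rfl⟩ := Int.eq_nat_or_neg k
  · rw [← npow_eq_zpow]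
    rcases Nat.lt_or_ge j n with hj | hj
    · rcases Nat.eq_zero_or_pos j with rfl | hj0
      · simpa using UP_sub_W (H.DPsubUP (H.gamma_sub_DP hs))
      · exact mem_W.2 (Or.inr (Or.inr (Or.inl ⟨j, hj0, hj, s, H.gamma_sub_DP hs, rfl⟩)))
    · obtain ⟨i, rfl⟩ : ∃ i, j = n + i := ⟨j - n, by omega⟩
      exact UQ_sub_W (H.gamma_fwd hs i).2
  · rw [← inv_npow_eq_zpow]
    exact UP_sub_W (H.gamma_bwd hs j).2

lemma a_bwd (H : Hyp n m δ Q f) (k : ℕ) :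
    (f⁻¹ ^ k) (aPt Q) = (Q.1, Q.2.1, Q.2.2 - 1 / 4 ^ k) ∧
      (f⁻¹ ^ k) (aPt Q) ∈ bigCube Q δ := by
  have hδ0 := H.hδ0
  have hmem : ∀ j : ℕ, ((Q.1, Q.2.1, Q.2.2 - 1 / 4 ^ j) : E3) ∈ bigCube Q δ := by
    intro j
    have h4j : (1:ℝ) ≤ 4 ^ j := one_le_pow₀ (by norm_num)
    have h4jp : (0:ℝ) < 4 ^ j := by positivity
    have hb : 1 / (4:ℝ) ^ j ≤ 1 := by rw [div_le_one h4jp]; exact h4j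
    have hb0 : 0 < 1 / (4:ℝ) ^ j := by positivity
    refine mem_UQ.2 ⟨?_, ?_, ?_⟩
    · simpa using by linarith
    · simpa using by linarith
    · rw [show (Q.2.2 - 1 / 4 ^ j - Q.2.2 : ℝ) = -(1 / 4 ^ j) by ring, abs_neg,
        abs_of_pos hb0]
      linarith
  induction k with
  | zero =>
    constructor
    · refine prodExt ?_ ?_ ?_ <;> simp [aPt]
    · have := hmem 0
      simpa [aPt] using this
  | succ k ih =>
    have hstep : f ((Q.1, Q.2.1, Q.2.2 - 1 / 4 ^ (k + 1)) : E3)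
        = ((Q.1, Q.2.1, Q.2.2 - 1 / 4 ^ k) : E3) := by
      rw [H.hlocQ _ (hmem (k + 1))]
      refine prodExt ?_ ?_ ?_ <;> simp
      rw [show ((4:ℝ) ^ (k+1)) = 4 ^ k * 4 from pow_succ 4 k]
      field_simp; ring
    have : (f⁻¹ ^ (k + 1)) (aPt Q) = f⁻¹ ((f⁻¹ ^ k) (aPt Q)) := pow_apply_succ f⁻¹ k _
    rw [this, ih.1, ← hstep]
    refine ⟨?_, ?_⟩
    · show f⁻¹ (f _) = _; simp
    · show f⁻¹ (f _) ∈ _; simpa using hmem (k + 1)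

lemma a_fwd (H : Hyp n m δ Q f) (j : ℕ) :
    (f ^ (m + j)) (aPt Q) = (0, -(1 / 4 ^ j), 0) ∧
      (f ^ (m + j)) (aPt Q) ∈ bigCube Ppt δ := by
  have hδ0 := H.hδ0
  have hmem : ∀ i : ℕ, ((0, -(1 / 4 ^ i), 0) : E3) ∈ bigCube Ppt δ := by
    intro i
    have h4i : (1:ℝ) ≤ 4 ^ i := one_le_pow₀ (by norm_num)
    have h4ip : (0:ℝ) < 4 ^ i := by positivity
    have hb : 1 / (4:ℝ) ^ i ≤ 1 := by rw [div_le_one h4ip]; exact h4i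
    have hb0 : 0 < 1 / (4:ℝ) ^ i := by positivity
    refine mem_UP.2 ⟨?_, ?_, ?_⟩
    · simpa using by linarith
    · rw [abs_neg, abs_of_pos hb0]; linarith
    · simpa using by linarith
  induction j with
  | zero =>
    have h0 := (H.transQ' H.aPt_mem_DQ).1
    rw [Nat.add_zero, h0]
    constructor
    · refine prodExt ?_ ?_ ?_ <;> simp [aPt]
    · have := hmem 0
      simp only [pow_zero] at this
      simpa [aPt] using this
  | succ j ih =>
    have hstep : f ((0, -(1 / 4 ^ j), 0) : E3) = ((0, -(1 / 4 ^ (j + 1)), 0) : E3) := by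
      rw [H.hlocP _ (hmem j)]
      refine prodExt ?_ ?_ ?_ <;> simp
      rw [show ((4:ℝ) ^ (j+1)) = 4 ^ j * 4 from pow_succ 4 j]
      ring
    have hpow : (f ^ (m + (j + 1))) (aPt Q) = f ((f ^ (m + j)) (aPt Q)) :=
      pow_apply_succ f (m + j) _
    rw [hpow, ih.1, hstep]
    exact ⟨rfl, hmem (j + 1)⟩

lemma a_orbit (H : Hyp n m δ Q f) (k : ℤ) :
    (f ^ k) (aPt Q) ∈ cycleNbhd f Q n m δ := by
  obtain ⟨j, rfl | rfl⟩ := Int.eq_nat_or_neg k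
  · rw [← npow_eq_zpow]
    rcases Nat.lt_or_ge j m with hj | hj
    · rcases Nat.eq_zero_or_pos j with rfl | hj0
      · simpa using UQ_sub_W (H.DQsubUQ H.aPt_mem_DQ)
      · exact mem_W.2 (Or.inr (Or.inr (Or.inr ⟨j, hj0, hj, aPt Q, H.aPt_mem_DQ, rfl⟩)))
    · obtain ⟨i, rfl⟩ : ∃ i, j = m + i := ⟨j - m, by omega⟩
      exact UP_sub_W (H.a_fwd i).2
  · rw [← inv_npow_eq_zpow]
    exact UQ_sub_W (H.a_bwd j).2

lemma P_orbit (H : Hyp n m δ Q f) (k : ℤ) :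
    (f ^ k) Ppt ∈ cycleNbhd f Q n m δ := by
  have hfix : ∀ k : ℤ, (f ^ k) Ppt = Ppt := by
    have h1 : ∀ j : ℕ, (f ^ j) Ppt = Ppt := by
      intro j; induction j with
      | zero => simp
      | succ j ih => rw [pow_apply_succ, ih, H.fP]
    have h2 : ∀ j : ℕ, (f⁻¹ ^ j) Ppt = Ppt := by
      intro j; induction j with
      | zero => simp
      | succ j ih =>
        rw [pow_apply_succ, ih]
        have : f (f⁻¹ Ppt) = f Ppt := by rw [Equiv.Perm.apply_inv_self f, H.fP]
        exact f.injective this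
    intro k
    obtain ⟨j, rfl | rfl⟩ := Int.eq_nat_or_neg k
    · rw [← npow_eq_zpow]; exact h1 j
    · rw [← inv_npow_eq_zpow]; exact h2 j
  rw [hfix k]
  refine UP_sub_W (mem_UP.2 ?_)
  have := H.hδ0
  refine ⟨?_, ?_, ?_⟩ <;> simp [Ppt] <;> linarith

lemma Q_orbit (H : Hyp n m δ Q f) (k : ℤ) :
    (f ^ k) Q ∈ cycleNbhd f Q n m δ := by
  have hfix : ∀ k : ℤ, (f ^ k) Q = Q := by
    have h1 : ∀ j : ℕ, (f ^ j) Q = Q := by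
      intro j; induction j with
      | zero => simp
      | succ j ih => rw [pow_apply_succ, ih, H.fQ]
    have h2 : ∀ j : ℕ, (f⁻¹ ^ j) Q = Q := by
      intro j; induction j with
      | zero => simp
      | succ j ih =>
        rw [pow_apply_succ, ih]
        have : f (f⁻¹ Q) = f Q := by rw [Equiv.Perm.apply_inv_self f, H.fQ]
        exact f.injective this
    intro k
    obtain ⟨j, rfl | rfl⟩ := Int.eq_nat_or_neg k
    · rw [← npow_eq_zpow]; exact h1 j
    · rw [← inv_npow_eq_zpow]; exact h2 j
  rw [hfix k]
  refine UQ_sub_W (mem_UQ.2 ?_)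
  have := H.hδ0
  refine ⟨?_, ?_, ?_⟩ <;> simp <;> linarith

/-- The set-equality part of Proposition 6.1. -/
theorem lambda_eq (H : Hyp n m δ Q f) :
    maxInvSet f Q n m δ
      = {Ppt} ∪ {Q} ∪ fullOrbit f (gammaSeg δ) ∪ fullOrbit f {aPt Q} := by
  ext u
  constructor
  · intro hu
    have hOrb := mem_maxInv.1 hu
    rcases H.lam_sub hOrb with h | h | ⟨k, s, hs, he⟩ | ⟨k, he⟩
    · exact Or.inl (Or.inl (Or.inl h))
    · exact Or.inl (Or.inl (Or.inr h))
    · exact Or.inl (Or.inr (Set.mem_iUnion.2 ⟨k, s, hs, he⟩))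
    · exact Or.inr (Set.mem_iUnion.2 ⟨k, aPt Q, rfl, he⟩)
  · intro hu
    refine mem_maxInv.2 ?_
    rcases hu with ((h | h) | h) | h
    · rw [Set.mem_singleton_iff.1 h]; exact H.P_orbit
    · rw [Set.mem_singleton_iff.1 h]; exact H.Q_orbit
    · obtain ⟨k, s, hs, rfl⟩ := Set.mem_iUnion.1 h
      intro c
      rw [zpow_comp]
      exact H.gamma_orbit hs _
    · obtain ⟨k, s, hs, rfl⟩ := Set.mem_iUnion.1 h
      rw [Set.mem_singleton_iff.1 hs]
      intro c
      rw [zpow_comp]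
      exact H.a_orbit _

end Hyp

namespace Hyp

lemma gamma_no_return (H : Hyp n m δ Q f) {s : E3} (hs : s ∈ gammaSeg δ) {j : ℕ}
    (hj : 1 ≤ j) : (f ^ j) s ∉ gammaSeg δ := by
  intro hmem
  have hsUP : ∀ s' : E3, s' ∈ gammaSeg δ → s' ∈ bigCube Ppt δ :=
    fun s' h => H.DPsubUP (H.gamma_sub_DP h)
  rcases Nat.lt_or_ge j n with hjn | hjn
  · exact (H.transP' (H.gamma_sub_DP hs)).2 j hj hjn (Or.inl (hsUP _ hmem))
  · obtain ⟨i, rfl⟩ : ∃ i, j = n + i := ⟨j - n, by omega⟩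
    exact H.notUQ_of_UP (hsUP _ hmem) (H.gamma_fwd hs i).2

lemma a_no_return (H : Hyp n m δ Q f) {j : ℕ} (hj : 1 ≤ j) : (f ^ j) (aPt Q) ≠ aPt Q := by
  intro hmem
  have haUQ : aPt Q ∈ bigCube Q δ := H.DQsubUQ H.aPt_mem_DQ
  rcases Nat.lt_or_ge j m with hjm | hjm
  · exact (H.transQ' H.aPt_mem_DQ).2 j hj hjm (Or.inr (by rw [hmem]; exact haUQ))
  · obtain ⟨i, rfl⟩ : ∃ i, j = m + i := ⟨j - m, by omega⟩
    have h2 := (H.a_fwd i).2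
    rw [hmem] at h2
    exact H.notUQ_of_UP h2 haUQ

end Hyp

lemma eq_dirac_of_compl_null {μ : Measure E3} (hμ : IsProbabilityMeasure μ) {c : E3}
    (h : μ {c}ᶜ = 0) : μ = Measure.dirac c := by
  haveI := hμ
  apply Measure.ext
  intro s hs
  rw [Measure.dirac_apply' _ hs]
  by_cases hc : c ∈ s
  · have hsub : sᶜ ⊆ ({c} : Set E3)ᶜ := by
      intro x hx
      simp only [Set.mem_compl_iff, Set.mem_singleton_iff]
      rintro rfl
      exact hx hc
    have h1 : μ sᶜ = 0 := measure_mono_null hsub h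
    rw [(prob_compl_eq_zero_iff hs).1 h1, Set.indicator_of_mem hc]
    rfl
  · have hsub : s ⊆ ({c} : Set E3)ᶜ := by
      intro x hx
      simp only [Set.mem_compl_iff, Set.mem_singleton_iff]
      rintro rfl
      exact hc hx
    rw [measure_mono_null hsub h, Set.indicator_of_notMem hc]

end Aux

/-- **Proposition 6.1 (non-twisted cycle, `ε = +1`).** For the non-twisted
heterodimensional cycle the maximal invariant set in the cycle neighborhood `W` is
`Λ = {P} ∪ {Q} ∪ O(γ) ∪ O(a)`. Consequently the only `f`-invariant ergodic Borel
probability measures giving full measure to `W` are `δ_P` and `δ_Q`; in particular no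
measure `t δ_P + (1−t) δ_Q` with `t ∈ (0,1)` is a weak* limit of `f`-invariant ergodic
Borel probability measures giving full measure to `W`. -/
theorem nontwisted_cycle_maximal_invariant_set
    (n m : ℕ) (hn : 2 ≤ n) (hm : 2 ≤ m)
    (δ : ℝ) (hδ0 : 0 < δ) (hδ : δ ≤ ((4 : ℝ) ^ (n + m))⁻¹)
    (Q : E3) (f : Equiv.Perm E3)
    (hfC : ContDiff ℝ 1 f) (hfinvC : ContDiff ℝ 1 f.symm)
    (hdisj : bigCube Ppt δ ∩ bigCube Q δ = ∅)
    (hdisjPQ : f '' bigCube Ppt δ ∩ bigCube Q δ = ∅)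
    (hdisjQP : f '' bigCube Q δ ∩ bigCube Ppt δ = ∅)
    (hlocP : ∀ v ∈ bigCube Ppt δ, f v = (2 * v.1, v.2.1 / 4, 4 * v.2.2))
    (hlocQ : ∀ v ∈ bigCube Q δ,
      f v = (Q.1 + (v.1 - Q.1) / 2, Q.2.1 + (v.2.1 - Q.2.1) / 4, Q.2.2 + 4 * (v.2.2 - Q.2.2)))
    (htransP : ∀ x ∈ Set.Icc (-δ) δ, ∀ y ∈ Set.Icc (-δ) δ, ∀ z ∈ Set.Icc (-δ) δ,
      (f ^ n) ((1 + x, y, z) : E3)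
          = (Q.1 + (-1 + x), Q.2.1 + y / 4 ^ n, Q.2.2 + 4 ^ n * z) ∧
      ∀ i, 1 ≤ i → i < n →
        (f ^ i) ((1 + x, y, z) : E3) ∉ bigCube Ppt δ ∪ bigCube Q δ)
    (htransQ : ∀ x ∈ Set.Icc (-δ) δ, ∀ y ∈ Set.Icc (-δ) δ, ∀ z ∈ Set.Icc (-δ) δ,
      (f ^ m) ((Q.1 + x, Q.2.1 + y, Q.2.2 + (-1 + z)) : E3)
          = ((1 : ℝ) * x, -1 + y / 4, 4 * z) ∧
      ∀ j, 1 ≤ j → j < m →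
        (f ^ j) ((Q.1 + x, Q.2.1 + y, Q.2.2 + (-1 + z)) : E3) ∉
          bigCube Ppt δ ∪ bigCube Q δ) :
    maxInvSet f Q n m δ
        = {Ppt} ∪ {Q} ∪ fullOrbit f (gammaSeg δ) ∪ fullOrbit f {aPt Q} ∧
    (∀ μ : Measure E3, IsProbabilityMeasure μ → Ergodic (⇑f) μ →
      μ (cycleNbhd f Q n m δ) = 1 → μ = Measure.dirac Ppt ∨ μ = Measure.dirac Q) ∧
    (∀ t ∈ Set.Ioo (0 : ℝ) 1,
      ¬ ∃ μseq : ℕ → Measure E3,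
        (∀ k, IsProbabilityMeasure (μseq k) ∧ Ergodic (⇑f) (μseq k) ∧
          μseq k (cycleNbhd f Q n m δ) = 1) ∧
        (∀ g : E3 → ℝ, Continuous g → (∃ C, ∀ x, |g x| ≤ C) →
          Tendsto (fun k => ∫ x, g x ∂(μseq k)) atTop
            (nhds (t * g Ppt + (1 - t) * g Q)))) := by
  classical
  have H : Hyp n m δ Q f :=
    ⟨hn, hm, hδ0, hδ, hdisj, hdisjPQ, hdisjQP, hlocP, hlocQ, htransP, htransQ⟩
  have hfc : Continuous ⇑f := hfC.continuous
  have hfic : Continuous ⇑f.symm := hfinvC.continuous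
  -- measurability of the various sets
  have hcube : ∀ c : E3, MeasurableSet (bigCube c δ) := by
    intro c
    have he : bigCube c δ = {v : E3 | |v.1 - c.1| < 1 + 2 * δ} ∩
        ({v : E3 | |v.2.1 - c.2.1| < 1 + 2 * δ} ∩ {v : E3 | |v.2.2 - c.2.2| < 1 + 2 * δ}) := rfl
    rw [he]
    refine MeasurableSet.inter ?_ (MeasurableSet.inter ?_ ?_)
    · exact (isOpen_lt ((continuous_fst.sub continuous_const).abs)
        continuous_const).measurableSet
    · exact (isOpen_lt (((continuous_fst.comp continuous_snd).sub continuous_const).abs)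
        continuous_const).measurableSet
    · exact (isOpen_lt (((continuous_snd.comp continuous_snd).sub continuous_const).abs)
        continuous_const).measurableSet
  have hDPm : MeasurableSet (DeltaP δ) := by
    have he : DeltaP δ = (fun v : E3 => v.1) ⁻¹' Set.Icc (1 - δ) (1 + δ) ∩
        ((fun v : E3 => v.2.1) ⁻¹' Set.Icc (-δ) δ ∩
          (fun v : E3 => v.2.2) ⁻¹' Set.Icc (-δ) δ) := rfl
    rw [he]
    exact ((isClosed_Icc.preimage continuous_fst).inter
      ((isClosed_Icc.preimage (continuous_fst.comp continuous_snd)).inter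
        (isClosed_Icc.preimage (continuous_snd.comp continuous_snd)))).measurableSet
  have hDQm : MeasurableSet (DeltaQ Q δ) := by
    have he : DeltaQ Q δ = (fun v : E3 => v.1 - Q.1) ⁻¹' Set.Icc (-δ) δ ∩
        ((fun v : E3 => v.2.1 - Q.2.1) ⁻¹' Set.Icc (-δ) δ ∩
          (fun v : E3 => v.2.2 - Q.2.2) ⁻¹' Set.Icc (-1 - δ) (-1 + δ)) := rfl
    rw [he]
    exact ((isClosed_Icc.preimage (continuous_fst.sub continuous_const)).inter
      ((isClosed_Icc.preimage ((continuous_fst.comp continuous_snd).sub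
          continuous_const)).inter
        (isClosed_Icc.preimage ((continuous_snd.comp continuous_snd).sub
          continuous_const)))).measurableSet
  have hγm : MeasurableSet (gammaSeg δ) := by
    have he : gammaSeg δ = (fun v : E3 => v.1) ⁻¹' Set.Icc (1 - δ) (1 + δ) ∩
        ((fun v : E3 => v.2.1) ⁻¹' {0} ∩ (fun v : E3 => v.2.2) ⁻¹' {0}) := rfl
    rw [he]
    exact ((isClosed_Icc.preimage continuous_fst).inter
      ((isClosed_singleton.preimage (continuous_fst.comp continuous_snd)).inter
        (isClosed_singleton.preimage (continuous_snd.comp continuous_snd)))).measurableSet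
  have hinv_coe : (f⁻¹ : Equiv.Perm E3) = f.symm := rfl
  have hcont_iter : ∀ j : ℕ, Continuous ⇑(f ^ j) := fun j => by
    rw [Equiv.Perm.coe_pow]; exact hfc.iterate j
  have hcont_inv_iter : ∀ j : ℕ, Continuous ⇑(f⁻¹ ^ j) := fun j => by
    rw [hinv_coe, Equiv.Perm.coe_pow]; exact hfic.iterate j
  have hzcont : ∀ c : ℤ, Continuous ⇑(f ^ c) := by
    intro c
    obtain ⟨j, rfl | rfl⟩ := Int.eq_nat_or_neg c
    · rw [zpow_natCast]; exact hcont_iter j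
    · rw [zpow_neg, zpow_natCast, ← inv_pow]; exact hcont_inv_iter j
  have hsymm_cont : ∀ j : ℕ, Continuous ⇑(f ^ j).symm := fun j => by
    rw [← Equiv.Perm.inv_def, ← inv_pow]; exact hcont_inv_iter j
  have hWm : MeasurableSet (cycleNbhd f Q n m δ) := by
    refine MeasurableSet.union (MeasurableSet.union (MeasurableSet.union
      (hcube _) (hcube _)) ?_) ?_
    · refine MeasurableSet.iUnion fun i => MeasurableSet.iUnion fun _ => ?_
      rw [Equiv.image_eq_preimage_symm]
      exact (hsymm_cont i).measurable hDPm
    · refine MeasurableSet.iUnion fun j => MeasurableSet.iUnion fun _ => ?_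
      rw [Equiv.image_eq_preimage_symm]
      exact (hsymm_cont j).measurable hDQm
  have hpart1 := H.lambda_eq
  -- Part 2: classification of ergodic measures supported in W
  have hpart2 : ∀ μ : Measure E3, IsProbabilityMeasure μ → Ergodic (⇑f) μ →
      μ (cycleNbhd f Q n m δ) = 1 →
      μ = Measure.dirac Ppt ∨ μ = Measure.dirac Q := by
    intro μ hμ hE hμW
    haveI := hμ
    have hmp : MeasurePreserving ⇑f μ μ := hE.toMeasurePreserving
    have hmps : MeasurePreserving ⇑f.symm μ μ := by
      let e : Homeomorph E3 E3 :=
        { toEquiv := f, continuous_toFun := hfc, continuous_invFun := hfic }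
      have h1 : MeasurePreserving ⇑(e.toMeasurableEquiv) μ μ := hmp
      exact h1.symm e.toMeasurableEquiv
    have hzmp : ∀ c : ℤ, MeasurePreserving ⇑(f ^ c) μ μ := by
      intro c
      obtain ⟨j, rfl | rfl⟩ := Int.eq_nat_or_neg c
      · rw [zpow_natCast, Equiv.Perm.coe_pow]; exact hmp.iterate j
      · rw [zpow_neg, zpow_natCast, ← inv_pow, hinv_coe, Equiv.Perm.coe_pow]
        exact hmps.iterate j
    -- the maximal invariant set has full measure
    have hΛeq : maxInvSet f Q n m δ
        = ⋂ c : ℤ, ⇑(f ^ (-c)) ⁻¹' cycleNbhd f Q n m δ := by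
      unfold maxInvSet
      exact Set.iInter_congr fun c => by rw [Equiv.image_eq_preimage_symm, perm_symm_zpow]
    have hΛm : MeasurableSet (⋂ c : ℤ, ⇑(f ^ (-c)) ⁻¹' cycleNbhd f Q n m δ) :=
      MeasurableSet.iInter fun c => (hzcont _).measurable hWm
    have hΛ1 : μ (maxInvSet f Q n m δ) = 1 := by
      rw [hΛeq]
      refine (prob_compl_eq_zero_iff hΛm).1 ?_
      rw [Set.compl_iInter]
      refine measure_iUnion_null fun c => ?_
      rw [measure_compl ((hzcont _).measurable hWm) (measure_ne_top μ _),
        (hzmp (-c)).measure_preimage hWm.nullMeasurableSet, hμW, measure_univ]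
      simp
    -- γ and a have measure zero
    have hγ0 : μ (gammaSeg δ) = 0 := by
      by_contra h0
      have key : ∀ k l : ℕ, k < l →
          Disjoint ((⇑f)^[k] ⁻¹' gammaSeg δ) ((⇑f)^[l] ⁻¹' gammaSeg δ) := by
        intro k l hkl
        rw [Set.disjoint_left]
        intro v hvk hvl
        have h1 : (⇑f)^[k] v ∈ gammaSeg δ := hvk
        have h2 : (⇑f)^[l] v ∈ gammaSeg δ := hvl
        have h3 : (⇑f)^[l] v = (⇑f)^[l - k] ((⇑f)^[k] v) := by
          rw [← Function.iterate_add_apply]; congr 1; omega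
        rw [h3] at h2
        have h4 : (f ^ (l - k)) ((⇑f)^[k] v) ∈ gammaSeg δ := by
          rw [Equiv.Perm.coe_pow]; exact h2
        exact H.gamma_no_return h1 (by omega) h4
      have hd : Pairwise (Function.onFun Disjoint fun k : ℕ => (⇑f)^[k] ⁻¹' gammaSeg δ) :=
        fun k l hkl => hkl.lt_or_gt.elim (fun h => key k l h) (fun h => (key l k h).symm)
      have hTm : ∀ k : ℕ, MeasurableSet ((⇑f)^[k] ⁻¹' gammaSeg δ) :=
        fun k => (hfc.iterate k).measurable hγm
      have hTμ : ∀ k : ℕ, μ ((⇑f)^[k] ⁻¹' gammaSeg δ) = μ (gammaSeg δ) :=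
        fun k => (hmp.iterate k).measure_preimage hγm.nullMeasurableSet
      have hle : μ (⋃ k : ℕ, (⇑f)^[k] ⁻¹' gammaSeg δ) ≤ 1 := prob_le_one
      rw [measure_iUnion hd hTm, tsum_congr hTμ,
        ENNReal.tsum_const_eq_top_of_ne_zero h0] at hle
      simp at hle
    have ha0 : μ ({aPt Q} : Set E3) = 0 := by
      by_contra h0
      have key : ∀ k l : ℕ, k < l →
          Disjoint ((⇑f)^[k] ⁻¹' {aPt Q}) ((⇑f)^[l] ⁻¹' ({aPt Q} : Set E3)) := by
        intro k l hkl
        rw [Set.disjoint_left]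
        intro v hvk hvl
        have h1 : (⇑f)^[k] v = aPt Q := hvk
        have h2 : (⇑f)^[l] v = aPt Q := hvl
        have h3 : (⇑f)^[l] v = (⇑f)^[l - k] ((⇑f)^[k] v) := by
          rw [← Function.iterate_add_apply]; congr 1; omega
        rw [h3, h1] at h2
        have h4 : (f ^ (l - k)) (aPt Q) = aPt Q := by
          rw [Equiv.Perm.coe_pow]; exact h2
        exact H.a_no_return (by omega) h4
      have hd : Pairwise (Function.onFun Disjoint
          fun k : ℕ => (⇑f)^[k] ⁻¹' ({aPt Q} : Set E3)) :=
        fun k l hkl => hkl.lt_or_gt.elim (fun h => key k l h) (fun h => (key l k h).symm)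
      have hTm : ∀ k : ℕ, MeasurableSet ((⇑f)^[k] ⁻¹' ({aPt Q} : Set E3)) :=
        fun k => (hfc.iterate k).measurable (measurableSet_singleton _)
      have hTμ : ∀ k : ℕ, μ ((⇑f)^[k] ⁻¹' ({aPt Q} : Set E3)) = μ {aPt Q} :=
        fun k => (hmp.iterate k).measure_preimage
          (measurableSet_singleton _).nullMeasurableSet
      have hle : μ (⋃ k : ℕ, (⇑f)^[k] ⁻¹' ({aPt Q} : Set E3)) ≤ 1 := prob_le_one
      rw [measure_iUnion hd hTm, tsum_congr hTμ,
        ENNReal.tsum_const_eq_top_of_ne_zero h0] at hle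
      simp at hle
    have horb0 : ∀ A : Set E3, MeasurableSet A → μ A = 0 → μ (fullOrbit f A) = 0 := by
      intro A hA h0
      refine measure_iUnion_null fun c => ?_
      rw [Equiv.image_eq_preimage_symm, perm_symm_zpow,
        (hzmp (-c)).measure_preimage hA.nullMeasurableSet]
      exact h0
    have hPQ1 : μ ({Ppt} ∪ {Q} : Set E3) = 1 := by
      have hge : (1 : ENNReal) ≤ μ ({Ppt} ∪ {Q} : Set E3) := by
        calc (1 : ENNReal) = μ (maxInvSet f Q n m δ) := hΛ1.symm
          _ = μ ((({Ppt} ∪ {Q}) ∪ fullOrbit f (gammaSeg δ)) ∪ fullOrbit f {aPt Q}) := by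
              rw [hpart1]
          _ ≤ μ (({Ppt} ∪ {Q}) ∪ fullOrbit f (gammaSeg δ)) + μ (fullOrbit f {aPt Q}) :=
              measure_union_le _ _
          _ = μ (({Ppt} ∪ {Q}) ∪ fullOrbit f (gammaSeg δ)) := by
              rw [horb0 _ (measurableSet_singleton _) ha0, add_zero]
          _ ≤ μ ({Ppt} ∪ {Q} : Set E3) + μ (fullOrbit f (gammaSeg δ)) :=
              measure_union_le _ _
          _ = μ ({Ppt} ∪ {Q} : Set E3) := by rw [horb0 _ hγm hγ0, add_zero]
      exact le_antisymm prob_le_one hge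
    have hPinv : ⇑f ⁻¹' ({Ppt} : Set E3) = {Ppt} := by
      ext x
      simp only [Set.mem_preimage, Set.mem_singleton_iff]
      constructor
      · intro h
        have : f x = f Ppt := by rw [h, H.fP]
        exact f.injective this
      · rintro rfl; exact H.fP
    rcases hE.toPreErgodic.measure_self_or_compl_eq_zero (measurableSet_singleton Ppt)
        hPinv with h | h
    · right
      have hQ1 : μ ({Q} : Set E3) = 1 := by
        have hge : (1 : ENNReal) ≤ μ ({Q} : Set E3) := by
          calc (1 : ENNReal) = μ ({Ppt} ∪ {Q} : Set E3) := hPQ1.symm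
            _ ≤ μ ({Ppt} : Set E3) + μ ({Q} : Set E3) := measure_union_le _ _
            _ = μ ({Q} : Set E3) := by rw [h, zero_add]
        exact le_antisymm prob_le_one hge
      exact eq_dirac_of_compl_null hμ
        ((prob_compl_eq_zero_iff (measurableSet_singleton _)).2 hQ1)
    · left
      exact eq_dirac_of_compl_null hμ h
  refine ⟨hpart1, hpart2, ?_⟩
  -- Part 3: no nontrivial convex combination is a weak* limit
  rintro t ⟨ht0, ht1⟩ ⟨μseq, hprops, hlim⟩
  have hPneQ : Ppt ≠ Q := by
    intro hPQ
    have hP : Ppt ∈ bigCube Ppt δ := by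
      refine mem_UP.2 ?_
      refine ⟨?_, ?_, ?_⟩ <;> simp [Ppt] <;> linarith
    have hmem : Ppt ∈ bigCube Ppt δ ∩ bigCube Q δ := ⟨hP, by rw [← hPQ]; exact hP⟩
    rw [hdisj] at hmem
    exact hmem
  have hdpos : 0 < dist Q Ppt := dist_pos.2 (Ne.symm hPneQ)
  set g : E3 → ℝ := fun x => max 0 (1 - dist x Ppt / dist Q Ppt) with hg
  have hgc : Continuous g :=
    continuous_const.max (continuous_const.sub
      ((continuous_id.dist continuous_const).div_const _))
  have hgb : ∀ x, |g x| ≤ 1 := by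
    intro x
    rw [abs_of_nonneg (le_max_left _ _)]
    refine max_le (by norm_num) ?_
    have h1 : 0 ≤ dist x Ppt / dist Q Ppt := div_nonneg dist_nonneg hdpos.le
    linarith
  have hgP : g Ppt = 1 := by simp [hg]
  have hgQ : g Q = 0 := by simp [hg, div_self (ne_of_gt hdpos)]
  have hT := hlim g hgc ⟨1, hgb⟩
  rw [hgP, hgQ, show t * 1 + (1 - t) * 0 = t by ring] at hT
  have hval : ∀ k, (∫ x, g x ∂(μseq k)) = 1 ∨ (∫ x, g x ∂(μseq k)) = 0 := by
    intro k
    obtain ⟨hk1, hk2, hk3⟩ := hprops k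
    rcases hpart2 _ hk1 hk2 hk3 with hh | hh
    · left; rw [hh, integral_dirac, hgP]
    · right; rw [hh, integral_dirac, hgQ]
  have hε : 0 < min t (1 - t) := lt_min ht0 (by linarith)
  obtain ⟨N, hN⟩ := Metric.tendsto_atTop.1 hT (min t (1 - t)) hε
  have hNN := hN N le_rfl
  rw [Real.dist_eq] at hNN
  have hminl := min_le_left t (1 - t)
  have hminr := min_le_right t (1 - t)
  rcases hval N with hh | hh <;> rw [hh] at hNN
  · rw [abs_of_nonneg (by linarith : (0:ℝ) ≤ 1 - t)] at hNN
    linarith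
  · rw [zero_sub, abs_neg, abs_of_pos ht0] at hNN
    linarith
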